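/- A finite simple graph G is a threshold graph if and only if G can be constructed from the one-vertex graph by repeatedly adding either an isolated vertex or a universal vertex (a vertex adjacent to all existing vertices). -/

import Mathlib

open SimpleGraph

/-- The graph `2K₂` on four vertices: two disjoint edges. -/
def twoK2 : SimpleGraph (Fin 4) :=
  SimpleGraph.fromRel (fun a b => (a = 0 ∧ b = 1) ∨ (a = 2 ∧ b = 3))

/-- A graph is a threshold graph if it has no induced subgraph isomorphic to
`2K₂`, `C₄` or `P₄`.  (Graph embeddings are induced-subgraph embeddings.) -/
def IsThreshold {V : Type} (G : SimpleGraph V) : Prop :=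
  IsEmpty (twoK2 ↪g G) ∧ IsEmpty (SimpleGraph.cycleGraph 4 ↪g G) ∧
    IsEmpty (SimpleGraph.pathGraph 4 ↪g G)

instance : DecidableRel twoK2.Adj := fun a b =>
  decidable_of_iff _ (SimpleGraph.fromRel_adj _ a b).symm

instance : DecidableRel (pathGraph 4).Adj := fun a b =>
  decidable_of_iff _ (pathGraph_adj (u := a) (v := b)).symm

lemma twoK2_adj : ∀ a b : Fin 4, twoK2.Adj a b ↔
    ((a = 0 ∧ b = 1) ∨ (b = 0 ∧ a = 1) ∨ (a = 2 ∧ b = 3) ∨ (b = 2 ∧ a = 3)) := by decide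

/-- Build an embedding of `C₄` from four suitable vertices. -/
def embC4 {V : Type} (G : SimpleGraph V) (a b c d : V)
    (hab : G.Adj a b) (hbc : G.Adj b c) (hcd : G.Adj c d) (hda : G.Adj d a)
    (hac : ¬ G.Adj a c) (hbd : ¬ G.Adj b d)
    (d1 : a ≠ b) (d2 : a ≠ c) (d3 : a ≠ d) (d4 : b ≠ c) (d5 : b ≠ d) (d6 : c ≠ d) :
    cycleGraph 4 ↪g G := by
  have h1 : ¬ G.Adj c a := fun h => hac h.symm
  have h2 : ¬ G.Adj d b := fun h => hbd h.symm
  have h3 := hab.symm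
  have h4 := hbc.symm
  have h5 := hcd.symm
  have h6 := hda.symm
  refine ⟨⟨![a,b,c,d], ?_⟩, @fun i j => ?_⟩
  · intro i j hij
    fin_cases i <;> fin_cases j <;> simp_all
  · change G.Adj (![a,b,c,d] i) (![a,b,c,d] j) ↔ _
    fin_cases i <;> fin_cases j <;>
      simp_all [cycleGraph_adj, Fin.ext_iff] <;> decide

/-- Build an embedding of `P₄` from four suitable vertices. -/
def embP4 {V : Type} (G : SimpleGraph V) (a b c d : V)
    (hab : G.Adj a b) (hbc : G.Adj b c) (hcd : G.Adj c d)
    (hac : ¬ G.Adj a c) (had : ¬ G.Adj a d) (hbd : ¬ G.Adj b d)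
    (d1 : a ≠ b) (d2 : a ≠ c) (d3 : a ≠ d) (d4 : b ≠ c) (d5 : b ≠ d) (d6 : c ≠ d) :
    pathGraph 4 ↪g G := by
  have h1 : ¬ G.Adj c a := fun h => hac h.symm
  have h2 : ¬ G.Adj d a := fun h => had h.symm
  have h3 : ¬ G.Adj d b := fun h => hbd h.symm
  have h4 := hab.symm
  have h5 := hbc.symm
  have h6 := hcd.symm
  refine ⟨⟨![a,b,c,d], ?_⟩, @fun i j => ?_⟩
  · intro i j hij
    fin_cases i <;> fin_cases j <;> simp_all
  · change G.Adj (![a,b,c,d] i) (![a,b,c,d] j) ↔ _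
    fin_cases i <;> fin_cases j <;>
      simp_all [pathGraph_adj, Fin.ext_iff] <;> decide

/-- Build an embedding of `2K₂` from four suitable vertices. -/
def emb2K2 {V : Type} (G : SimpleGraph V) (a b c d : V)
    (hab : G.Adj a b) (hcd : G.Adj c d)
    (hac : ¬ G.Adj a c) (had : ¬ G.Adj a d) (hbc : ¬ G.Adj b c) (hbd : ¬ G.Adj b d)
    (d1 : a ≠ b) (d2 : a ≠ c) (d3 : a ≠ d) (d4 : b ≠ c) (d5 : b ≠ d) (d6 : c ≠ d) :
    twoK2 ↪g G := by
  have h1 : ¬ G.Adj c a := fun h => hac h.symm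
  have h2 : ¬ G.Adj d a := fun h => had h.symm
  have h3 : ¬ G.Adj c b := fun h => hbc h.symm
  have h4 : ¬ G.Adj d b := fun h => hbd h.symm
  have h5 := hab.symm
  have h6 := hcd.symm
  refine ⟨⟨![a,b,c,d], ?_⟩, @fun i j => ?_⟩
  · intro i j hij
    fin_cases i <;> fin_cases j <;> simp_all
  · change G.Adj (![a,b,c,d] i) (![a,b,c,d] j) ↔ _
    fin_cases i <;> fin_cases j <;>
      simp_all [twoK2_adj, Fin.ext_iff] <;> decide

/-- Every nonempty threshold graph has a universal or an isolated vertex. -/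
lemma exists_special {V : Type} [Fintype V] [Nonempty V] (G : SimpleGraph V)
    (h : IsThreshold G) :
    ∃ v : V, (∀ u, u ≠ v → G.Adj v u) ∨ (∀ u, ¬ G.Adj v u) := by
  classical
  by_contra hc
  push_neg at hc
  obtain ⟨v, hvmax⟩ := Finite.exists_max (fun u : V => G.degree u)
  obtain ⟨⟨x, hxv, hvx⟩, -⟩ := hc v
  have hne : ∀ u : V, ∃ w, G.Adj u w := by
    intro u
    obtain ⟨-, w, hw⟩ := hc u
    exact ⟨w, hw⟩
  by_cases hcase : ∃ y, G.Adj x y ∧ G.Adj v y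
  · obtain ⟨y, hxy, hvy⟩ := hcase
    -- find z adjacent to v, not adjacent to y, with z ≠ y
    have hsub : ¬ (G.neighborFinset v ⊆ insert y (G.neighborFinset y)) := by
      intro hsub
      have hxny : x ∈ G.neighborFinset y := by
        rw [mem_neighborFinset]; exact hxy.symm
      have hvny : v ∈ G.neighborFinset y := by
        rw [mem_neighborFinset]; exact hvy.symm
      have hxnv : x ∉ G.neighborFinset v := by
        rw [mem_neighborFinset]; exact hvx
      have hvnv : v ∉ G.neighborFinset v := by
        rw [mem_neighborFinset]; exact G.irrefl
      have hynv : y ∈ G.neighborFinset v := by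
        rw [mem_neighborFinset]; exact hvy
      have hss : insert v (insert x ((G.neighborFinset v).erase y)) ⊆ G.neighborFinset y := by
        intro u hu
        simp only [Finset.mem_insert] at hu
        rcases hu with rfl | rfl | hu
        · exact hvny
        · exact hxny
        · have := hsub (Finset.mem_of_mem_erase hu)
          rcases Finset.mem_insert.mp this with rfl | h
          · exact absurd rfl (Finset.ne_of_mem_erase hu)
          · exact h
      have hcard : G.degree v + 1 ≤ G.degree y := by
        have h1 : ((G.neighborFinset v).erase y).card = G.degree v - 1 := by
          rw [Finset.card_erase_of_mem hynv]; rfl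
        have hxe : x ∉ (G.neighborFinset v).erase y :=
          fun hx => hxnv (Finset.mem_of_mem_erase hx)
        have hve : v ∉ insert x ((G.neighborFinset v).erase y) := by
          simp only [Finset.mem_insert]
          rintro (rfl | hv)
          · exact hxv rfl
          · exact hvnv (Finset.mem_of_mem_erase hv)
        have := Finset.card_le_card hss
        rw [Finset.card_insert_of_notMem hve, Finset.card_insert_of_notMem hxe, h1] at this
        have hd1 : 1 ≤ G.degree v := Finset.card_pos.mpr ⟨y, hynv⟩
        have hdy : (G.neighborFinset y).card = G.degree y := rfl
        omega
      have := hvmax y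
      omega
    obtain ⟨z, hz1, hz2⟩ := Finset.not_subset.mp hsub
    simp only [Finset.mem_insert, mem_neighborFinset, not_or] at hz1 hz2
    obtain ⟨hzy, hyz⟩ := hz2
    have hvz : G.Adj v z := hz1
    have d1 : v ≠ y := hvy.ne
    have d2 : v ≠ z := hvz.ne
    have d3 : v ≠ x := fun h => hxv h.symm
    have d4 : x ≠ y := hxy.ne
    have d5 : y ≠ z := fun h => hzy h.symm
    have d6 : x ≠ z := fun h => hvx (h ▸ hvz)
    by_cases hzx : G.Adj z x
    · -- C4 : v - z - x - y - v
      exact h.2.1.false (embC4 G v z x y hvz hzx hxy hvy.symm hvx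
        (fun h' => hyz h'.symm) d2 d3 d1 d6.symm (Ne.symm d5) d4)
    · -- P4 : z - v - y - x
      exact h.2.2.false (embP4 G z v y x hvz.symm hvy hxy.symm
        (fun h' => hyz h'.symm) hzx hvx
        d2.symm (Ne.symm d5) d6.symm d1 d3 d4.symm)
  · push_neg at hcase
    obtain ⟨y, hxy⟩ := hne x
    obtain ⟨w, hvw⟩ := hne v
    have hvy : ¬ G.Adj v y := hcase y hxy
    have hxw : ¬ G.Adj x w := fun h => hcase w h hvw
    have d1 : v ≠ w := hvw.ne
    have d2 : v ≠ x := fun h => hxv h.symm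
    have d3 : v ≠ y := fun h => hvx (h ▸ hxy.symm)
    have d4 : x ≠ y := hxy.ne
    have d5 : w ≠ x := fun h => hvx (h ▸ hvw)
    have d6 : w ≠ y := fun h => hvy (h ▸ hvw)
    by_cases hwy : G.Adj w y
    · -- P4 : v - w - y - x
      exact h.2.2.false (embP4 G v w y x hvw hwy hxy.symm hvy hvx
        (fun h' => hxw h'.symm) d1 d3 d2 d6 d5 d4.symm)
    · -- 2K2 : edges vw and xy
      exact h.1.false (emb2K2 G v w x y hvw hxy hvx hvy
        (fun h' => hxw h'.symm) hwy d1 d2 d3 d5 d6 d4)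

lemma threshold_main : ∀ (n : ℕ) (V : Type) [Fintype V] (G : SimpleGraph V),
    Fintype.card V = n → IsThreshold G →
    ∃ e : Fin n ≃ V, ∀ i : Fin n,
      (∀ j : Fin n, j < i → G.Adj (e i) (e j)) ∨
      (∀ j : Fin n, j < i → ¬ G.Adj (e i) (e j))
  | 0, V, _, G, hcard, _ => by
      have : IsEmpty V := Fintype.card_eq_zero_iff.mp hcard
      exact ⟨Equiv.equivOfIsEmpty _ _, fun i => i.elim0⟩
  | (n + 1), V, _, G, hcard, hT => by
      classical
      have hne : Nonempty V := Fintype.card_pos_iff.mp (by omega)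
      obtain ⟨v, hv⟩ := exists_special G hT
      let f : {u : V // u ≠ v} ↪ V := Function.Embedding.subtype _
      let G' : SimpleGraph {u : V // u ≠ v} := G.comap f
      have hT' : IsThreshold G' :=
        ⟨⟨fun e => hT.1.false ((Embedding.comap f G).comp e)⟩,
         ⟨fun e => hT.2.1.false ((Embedding.comap f G).comp e)⟩,
         ⟨fun e => hT.2.2.false ((Embedding.comap f G).comp e)⟩⟩
      have hcard' : Fintype.card {u : V // u ≠ v} = n := by
        have h1 : Fintype.card {u : V // ¬ u = v} =
            Fintype.card V - Fintype.card {u : V // u = v} :=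
          Fintype.card_subtype_compl _
        rw [Fintype.card_subtype_eq, hcard] at h1
        simpa using h1
      obtain ⟨e', he'⟩ := threshold_main n {u : V // u ≠ v} G' hcard' hT'
      refine ⟨(finSuccEquivLast).trans ((e'.optionCongr).trans (Equiv.optionSubtypeNe v)), ?_⟩
      set e := (finSuccEquivLast).trans ((e'.optionCongr).trans (Equiv.optionSubtypeNe v)) with hedef
      have hcs : ∀ k : Fin n, e (Fin.castSucc k) = (e' k : V) := by
        intro k
        simp [hedef, e, finSuccEquivLast_castSucc]
      have hlast : e (Fin.last n) = v := by
        simp [hedef, e, finSuccEquivLast_last]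
      intro i
      rcases Fin.eq_castSucc_or_eq_last i with ⟨i', rfl⟩ | rfl
      · rcases he' i' with hall | hnone
        · left
          intro j hj
          have hjne : j ≠ Fin.last n :=
            Fin.ne_last_of_lt (lt_of_lt_of_le hj (Fin.le_last _))
          obtain ⟨j', rfl⟩ := Fin.exists_castSucc_eq.mpr hjne
          have hj' : j' < i' := by
            simpa [Fin.castSucc_lt_castSucc_iff] using hj
          have := hall j' hj'
          rw [hcs, hcs]
          exact this
        · right
          intro j hj
          have hjne : j ≠ Fin.last n :=
            Fin.ne_last_of_lt (lt_of_lt_of_le hj (Fin.le_last _))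
          obtain ⟨j', rfl⟩ := Fin.exists_castSucc_eq.mpr hjne
          have hj' : j' < i' := by
            simpa [Fin.castSucc_lt_castSucc_iff] using hj
          have := hnone j' hj'
          rw [hcs, hcs]
          exact this
      · rcases hv with huniv | hiso
        · left
          intro j hj
          have hjne : j ≠ Fin.last n := Fin.ne_last_of_lt hj
          obtain ⟨j', rfl⟩ := Fin.exists_castSucc_eq.mpr hjne
          rw [hlast, hcs]
          exact huniv _ (e' j').2
        · right
          intro j hj
          rw [hlast]
          exact hiso _

lemma no_embed {n : ℕ} (G : SimpleGraph (Fin n)) (e : Fin n ≃ Fin n)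
    (he : ∀ i : Fin n, (∀ j : Fin n, j < i → G.Adj (e i) (e j)) ∨
      (∀ j : Fin n, j < i → ¬ G.Adj (e i) (e j)))
    (H : SimpleGraph (Fin 4))
    (hH : ∀ a : Fin 4, (∃ b, H.Adj a b) ∧ (∃ c, c ≠ a ∧ ¬ H.Adj a c)) :
    IsEmpty (H ↪g G) := by
  constructor
  intro f
  obtain ⟨a, ha⟩ := Finite.exists_max (fun a : Fin 4 => e.symm (f a))
  obtain ⟨⟨b, hb⟩, ⟨c, hca, hc⟩⟩ := hH a
  have hlt : ∀ d : Fin 4, d ≠ a → e.symm (f d) < e.symm (f a) := by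
    intro d hd
    refine lt_of_le_of_ne (ha d) ?_
    intro hEq
    exact hd (f.injective (e.symm.injective hEq))
  rcases he (e.symm (f a)) with hall | hnone
  · have := hall (e.symm (f c)) (hlt c hca)
    rw [Equiv.apply_symm_apply, Equiv.apply_symm_apply] at this
    exact hc (f.map_rel_iff.mp this)
  · have := hnone (e.symm (f b)) (hlt b (fun h => H.irrefl (h ▸ hb)))
    rw [Equiv.apply_symm_apply, Equiv.apply_symm_apply] at this
    exact this (f.map_rel_iff.mpr hb)

theorem stmt9 {n : ℕ} (hn : 0 < n) (G : SimpleGraph (Fin n)) :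
    IsThreshold G ↔
      ∃ e : Fin n ≃ Fin n, ∀ i : Fin n,
        (∀ j : Fin n, j < i → G.Adj (e i) (e j)) ∨
        (∀ j : Fin n, j < i → ¬ G.Adj (e i) (e j)) := by
  constructor
  · intro h
    exact threshold_main n (Fin n) G (Fintype.card_fin n) h
  · rintro ⟨e, he⟩
    refine ⟨no_embed G e he _ ?_, no_embed G e he _ ?_, no_embed G e he _ ?_⟩
    · decide
    · decide
    · decide
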